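/- Let A, R be p×p symmetric positive semidefinite real matrices and suppose the minimum nonzero singular value of A + R is at least ε > 0 uniformly over a set S of pairs (A, b) with b ∈ range(A+R) and |A| ≤ c₁, |b| ≤ c₂. Then the map (A, b) ↦ (A+R)⁺ b is Lipschitz on S ∩ {(A,b) : msv(A+R) ≥ ε}, with Lipschitz constant depending only on ε, c₁, c₂. -/

import Mathlib

open Matrix

attribute [local instance] Matrix.normedAddCommGroup

/-- The four Penrose conditions characterizing the Moore–Penrose pseudoinverse. -/
def IsMoorePenroseInv {p : ℕ} (A B : Matrix (Fin p) (Fin p) ℝ) : Prop :=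
  A * B * A = A ∧ B * A * B = B ∧ (A * B)ᵀ = A * B ∧ (B * A)ᵀ = B * A

/-- sup-norm bound for matrix-vector multiplication. -/
lemma aux_mulVec_norm_le {p : ℕ} (M : Matrix (Fin p) (Fin p) ℝ) (v : Fin p → ℝ) :
    ‖M.mulVec v‖ ≤ p * ‖M‖ * ‖v‖ := by
  have h : 0 ≤ (p : ℝ) * ‖M‖ * ‖v‖ := by positivity
  rw [pi_norm_le_iff_of_nonneg h]
  intro i
  calc ‖M.mulVec v i‖ = |∑ j, M i j * v j| := by
        simp [Matrix.mulVec, dotProduct, Real.norm_eq_abs]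
  _ ≤ ∑ j, |M i j * v j| := Finset.abs_sum_le_sum_abs _ _
  _ ≤ ∑ _j : Fin p, ‖M‖ * ‖v‖ := by
        refine Finset.sum_le_sum fun j _ => ?_
        rw [abs_mul]
        exact mul_le_mul (M.norm_entry_le_entrywise_sup_norm)
          (norm_le_pi_norm v j) (abs_nonneg _) (norm_nonneg _)
  _ = p * ‖M‖ * ‖v‖ := by simp [Finset.sum_const]; ring

/-- entries of a symmetric idempotent matrix are bounded by 1. -/
lemma aux_proj_entry_le {p : ℕ} (Q : Matrix (Fin p) (Fin p) ℝ)
    (hsym : Qᵀ = Q) (hidem : Q * Q = Q) (i j : Fin p) : |Q i j| ≤ 1 := by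
  have hdiag : ∀ k : Fin p, Q k k = ∑ l, (Q l k) ^ 2 := by
    intro k
    have := congrFun (congrFun hidem k) k
    simp only [Matrix.mul_apply] at this
    rw [← this]
    refine Finset.sum_congr rfl fun l _ => ?_
    have : Q k l = Q l k := by
      conv_lhs => rw [← hsym]
      rfl
    rw [this]; ring
  have h1 : (Q i j) ^ 2 ≤ Q j j := by
    rw [hdiag j]
    exact Finset.single_le_sum (f := fun l => (Q l j) ^ 2)
      (fun l _ => sq_nonneg _) (Finset.mem_univ i)
  have h2 : Q j j ≤ 1 := by
    by_contra h
    push_neg at h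
    have h0 : 0 ≤ Q j j := by
      rw [hdiag j]; exact Finset.sum_nonneg fun l _ => sq_nonneg _
    have h3 : (Q j j) ^ 2 ≤ Q j j := by
      conv_rhs => rw [hdiag j]
      exact Finset.single_le_sum (f := fun l => (Q l j) ^ 2)
        (fun l _ => sq_nonneg _) (Finset.mem_univ j)
    nlinarith
  nlinarith [abs_nonneg (Q i j), sq_abs (Q i j)]

/-- sup-norm bound for application of a symmetric idempotent. -/
lemma aux_proj_mulVec_norm_le {p : ℕ} (Q : Matrix (Fin p) (Fin p) ℝ)
    (hsym : Qᵀ = Q) (hidem : Q * Q = Q) (v : Fin p → ℝ) :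
    ‖Q.mulVec v‖ ≤ p * ‖v‖ := by
  have hQ : ‖Q‖ ≤ 1 := by
    rw [Matrix.norm_le_iff zero_le_one]
    intro i j
    exact aux_proj_entry_le Q hsym hidem i j
  calc ‖Q.mulVec v‖ ≤ p * ‖Q‖ * ‖v‖ := aux_mulVec_norm_le Q v
  _ ≤ p * 1 * ‖v‖ := by
      have hp : (0:ℝ) ≤ p := Nat.cast_nonneg p
      exact mul_le_mul_of_nonneg_right (mul_le_mul_of_nonneg_left hQ hp) (norm_nonneg v)
  _ = p * ‖v‖ := by ring

/-- For symmetric `M` with a Penrose inverse `PA`, and `b` in the range of `M`,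
`M (PA b) = b` and `PA b` lies in the range of `M`. -/
lemma aux_range {p : ℕ} {M PA : Matrix (Fin p) (Fin p) ℝ} (hMsym : Mᵀ = M)
    (h1 : M * PA * M = M) (h4 : (PA * M)ᵀ = PA * M) {b : Fin p → ℝ}
    (hb : ∃ w, M.mulVec w = b) :
    M.mulVec (PA.mulVec b) = b ∧ ∃ u, M.mulVec u = PA.mulVec b := by
  obtain ⟨w, rfl⟩ := hb
  constructor
  · rw [mulVec_mulVec, mulVec_mulVec, h1]
  · refine ⟨PAᵀ.mulVec w, ?_⟩
    rw [mulVec_mulVec, mulVec_mulVec]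
    have hMM : M * PAᵀ = PA * M := by
      calc M * PAᵀ = Mᵀ * PAᵀ := by rw [hMsym]
      _ = (PA * M)ᵀ := (Matrix.transpose_mul PA M).symm
      _ = PA * M := h4
    rw [hMM]

/-- final arithmetic assembly. -/
lemma aux_arith (ε C1 CU qN E F dn Qn un : ℝ) (hε : 0 < ε) (hC1 : 0 ≤ C1)
    (hCU : 0 ≤ CU) (hqN : 0 ≤ qN) (hE : 0 ≤ E) (hF : 0 ≤ F)
    (hd : dn ≤ Qn + un) (hu : un ≤ CU * E)
    (hQ : ε * Qn ≤ C1 * E + F + qN * (CU * E)) :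
    dn ≤ ((C1 + qN * CU + ε * CU + 1) / ε) * (E + F) := by
  rw [div_mul_eq_mul_div, le_div_iff₀ hε]
  nlinarith [mul_le_mul_of_nonneg_left hd hε.le, mul_le_mul_of_nonneg_left hu hε.le,
    mul_nonneg hC1 hF, mul_nonneg hqN (mul_nonneg hCU hF),
    mul_nonneg (mul_nonneg hε.le hCU) hF, hQ, hE]

set_option maxHeartbeats 1000000 in
/-- The core estimate for abstract symmetric matrices with Penrose inverses. -/
lemma aux_core {p : ℕ} (M M' PA PA' : Matrix (Fin p) (Fin p) ℝ) (b b' : Fin p → ℝ)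
    (ε c₂ N : ℝ) (hε : 0 < ε) (hc₂ : 0 ≤ c₂) (hN : 0 ≤ N)
    (hMsym : Mᵀ = M) (hM'sym : M'ᵀ = M')
    (h1 : M * PA * M = M) (h4 : (PA * M)ᵀ = PA * M)
    (h1' : M' * PA' * M' = M') (h3' : (M' * PA')ᵀ = M' * PA')
    (h4' : (PA' * M')ᵀ = PA' * M')
    (hmsv : ∀ v : Fin p → ℝ, (∃ w, M.mulVec w = v) → ε * ‖v‖ ≤ ‖M.mulVec v‖)
    (hmsv' : ∀ v : Fin p → ℝ, (∃ w, M'.mulVec w = v) → ε * ‖v‖ ≤ ‖M'.mulVec v‖)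
    (hnb : ‖b‖ ≤ c₂) (hnb' : ‖b'‖ ≤ c₂)
    (hb : ∃ w, M.mulVec w = b) (hb' : ∃ w, M'.mulVec w = b')
    (hM'B : ‖M'‖ ≤ N) :
    ‖PA.mulVec b - PA'.mulVec b'‖ ≤
      ((↑p * (c₂ / ε) + (↑p * N) * ((1 + ↑p) * (↑p * (c₂ / ε ^ 2)))
        + ε * ((1 + ↑p) * (↑p * (c₂ / ε ^ 2))) + 1) / ε)
        * (‖M - M'‖ + ‖b - b'‖) := by
  obtain ⟨hMx, hxr⟩ := aux_range hMsym h1 h4 hb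
  obtain ⟨hM'x', hx'r⟩ := aux_range hM'sym h1' h4' hb'
  obtain ⟨hMy, hyr⟩ := aux_range hMsym h1 h4 hxr
  set x := PA.mulVec b with hxdef
  set x' := PA'.mulVec b' with hx'def
  set y := PA.mulVec x with hydef
  -- norm bounds on x, x', y
  have hnx : ‖x‖ ≤ c₂ / ε := by
    have h := hmsv x hxr
    rw [hMx] at h
    rw [le_div_iff₀ hε]
    calc ‖x‖ * ε = ε * ‖x‖ := mul_comm _ _
    _ ≤ ‖b‖ := h
    _ ≤ c₂ := hnb
  have hny : ‖y‖ ≤ c₂ / ε ^ 2 := by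
    have h := hmsv y hyr
    rw [hMy] at h
    rw [le_div_iff₀ (by positivity : (0:ℝ) < ε ^ 2)]
    have hx2 : ‖x‖ * ε ≤ c₂ := (le_div_iff₀ hε).mp hnx
    nlinarith [mul_le_mul_of_nonneg_right h hε.le]
  -- the projection Q'
  set Q' := M' * PA' with hQ'def
  have hQ'M' : Q' * M' = M' := h1'
  have hQ'sym : Q'ᵀ = Q' := h3'
  have hQ'idem : Q' * Q' = Q' := by
    calc Q' * Q' = (M' * PA' * M') * PA' := by rw [hQ'def]; noncomm_ring
    _ = Q' := by rw [h1']
  have hQ'x' : Q'.mulVec x' = x' := by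
    obtain ⟨u', hu'⟩ := hx'r
    rw [← hu', mulVec_mulVec, hQ'M']
  have hqm : Q'.mulVec (M'.mulVec y) = M'.mulVec y := by
    rw [mulVec_mulVec, hQ'M']
  -- the vectors wv and uvec
  set wv := (M - M').mulVec y with hwvdef
  set uvec := x - Q'.mulVec x with huvecdef
  have huv : uvec = wv - Q'.mulVec wv := by
    rw [huvecdef, hwvdef, Matrix.sub_mulVec, Matrix.mulVec_sub, hqm, ← hMy]
    abel
  -- decomposition of d = x - x'
  have hQd : Q'.mulVec (x - x') = (x - x') - uvec := by
    rw [Matrix.mulVec_sub, hQ'x', huvecdef]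
    abel
  have hdB : ‖x - x'‖ ≤ ‖Q'.mulVec (x - x')‖ + ‖uvec‖ := by
    have heq : Q'.mulVec (x - x') + uvec = x - x' := by rw [hQd]; abel
    calc ‖x - x'‖ = ‖Q'.mulVec (x - x') + uvec‖ := by rw [heq]
    _ ≤ _ := norm_add_le _ _
  -- norm bounds
  have hE : (0:ℝ) ≤ ‖M - M'‖ := norm_nonneg _
  have hp : (0:ℝ) ≤ p := Nat.cast_nonneg p
  have hwvB : ‖wv‖ ≤ ↑p * ‖M - M'‖ * (c₂ / ε ^ 2) := by
    calc ‖wv‖ ≤ ↑p * ‖M - M'‖ * ‖y‖ := aux_mulVec_norm_le _ _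
    _ ≤ ↑p * ‖M - M'‖ * (c₂ / ε ^ 2) :=
        mul_le_mul_of_nonneg_left hny (by positivity)
  have huB : ‖uvec‖ ≤ ((1 + ↑p) * (↑p * (c₂ / ε ^ 2))) * ‖M - M'‖ := by
    have hq : ‖Q'.mulVec wv‖ ≤ ↑p * ‖wv‖ :=
      aux_proj_mulVec_norm_le Q' hQ'sym hQ'idem wv
    have hle : ‖uvec‖ ≤ ‖wv‖ + ‖Q'.mulVec wv‖ := by
      rw [huv]; exact norm_sub_le _ _
    nlinarith [hwvB, norm_nonneg wv]
  -- M' applied to d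
  have hM'd : M'.mulVec (x - x') = (M' - M).mulVec x + (b - b') := by
    rw [Matrix.mulVec_sub, hM'x', Matrix.sub_mulVec, hMx]
    abel
  have hnM'd : ‖M'.mulVec (x - x')‖ ≤ (↑p * (c₂ / ε)) * ‖M - M'‖ + ‖b - b'‖ := by
    rw [hM'd]
    have h1v : ‖(M' - M).mulVec x‖ ≤ ↑p * ‖M' - M‖ * ‖x‖ := aux_mulVec_norm_le _ _
    rw [norm_sub_rev M' M] at h1v
    calc ‖(M' - M).mulVec x + (b - b')‖
        ≤ ‖(M' - M).mulVec x‖ + ‖b - b'‖ := norm_add_le _ _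
    _ ≤ (↑p * (c₂ / ε)) * ‖M - M'‖ + ‖b - b'‖ := by
        nlinarith [hnx, norm_nonneg x, mul_nonneg hp hE]
  -- key bound on Q' d
  have hQbound : ε * ‖Q'.mulVec (x - x')‖ ≤
      (↑p * (c₂ / ε)) * ‖M - M'‖ + ‖b - b'‖
        + (↑p * N) * (((1 + ↑p) * (↑p * (c₂ / ε ^ 2))) * ‖M - M'‖) := by
    have hrange : ∃ w₀, M'.mulVec w₀ = Q'.mulVec (x - x') :=
      ⟨PA'.mulVec (x - x'), by rw [hQ'def, mulVec_mulVec]⟩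
    have hstep := hmsv' _ hrange
    have hMQ : M'.mulVec (Q'.mulVec (x - x'))
        = M'.mulVec (x - x') - M'.mulVec uvec := by
      rw [hQd, Matrix.mulVec_sub]
    have hMu : ‖M'.mulVec uvec‖ ≤
        (↑p * N) * (((1 + ↑p) * (↑p * (c₂ / ε ^ 2))) * ‖M - M'‖) := by
      calc ‖M'.mulVec uvec‖ ≤ ↑p * ‖M'‖ * ‖uvec‖ := aux_mulVec_norm_le _ _
      _ ≤ ↑p * N * ‖uvec‖ :=
          mul_le_mul_of_nonneg_right
            (mul_le_mul_of_nonneg_left hM'B hp) (norm_nonneg uvec)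
      _ ≤ ↑p * N * (((1 + ↑p) * (↑p * (c₂ / ε ^ 2))) * ‖M - M'‖) :=
          mul_le_mul_of_nonneg_left huB (mul_nonneg hp hN)
    calc ε * ‖Q'.mulVec (x - x')‖ ≤ ‖M'.mulVec (Q'.mulVec (x - x'))‖ := hstep
    _ ≤ ‖M'.mulVec (x - x')‖ + ‖M'.mulVec uvec‖ := by
        rw [hMQ]; exact norm_sub_le _ _
    _ ≤ _ := add_le_add hnM'd hMu
  exact aux_arith ε (↑p * (c₂ / ε)) ((1 + ↑p) * (↑p * (c₂ / ε ^ 2)))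
    (↑p * N) ‖M - M'‖ ‖b - b'‖ _ _ _ hε (by positivity) (by positivity)
    (by positivity) hE (norm_nonneg _) hdB huB hQbound

/-- A real positive semidefinite matrix is symmetric. -/
lemma aux_psd_transpose {p : ℕ} {M : Matrix (Fin p) (Fin p) ℝ}
    (hM : M.PosSemidef) : Mᵀ = M := by
  ext i j
  have := congrFun (congrFun hM.1 i) j
  simpa using this

/-- on the set of pairs `(A, b)` with `A` symmetric PSD,
`b ∈ range(A+R)`, `‖A‖ ≤ c₁`, `‖b‖ ≤ c₂`, and the minimum nonzero singular
value of `A+R` bounded below by `ε` (expressed as `ε‖v‖ ≤ ‖(A+R)v‖` for `v` in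
the range of `A+R`), the map `(A, b) ↦ (A+R)⁺ b` is Lipschitz, with a constant
depending only on `ε, c₁, c₂`. -/
theorem stmt_14 {p : ℕ} (R : Matrix (Fin p) (Fin p) ℝ) (hR : R.PosSemidef)
    (ε c₁ c₂ : ℝ) (hε : 0 < ε) (hc₁ : 0 < c₁) (hc₂ : 0 < c₂) :
    ∃ L : ℝ, 0 < L ∧
      ∀ (A A' PA PA' : Matrix (Fin p) (Fin p) ℝ) (b b' : Fin p → ℝ),
        A.PosSemidef → A'.PosSemidef →
        IsMoorePenroseInv (A + R) PA → IsMoorePenroseInv (A' + R) PA' →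
        (∀ v : Fin p → ℝ, (∃ w, (A + R).mulVec w = v) →
            ε * ‖v‖ ≤ ‖(A + R).mulVec v‖) →
        (∀ v : Fin p → ℝ, (∃ w, (A' + R).mulVec w = v) →
            ε * ‖v‖ ≤ ‖(A' + R).mulVec v‖) →
        ‖A‖ ≤ c₁ → ‖A'‖ ≤ c₁ → ‖b‖ ≤ c₂ → ‖b'‖ ≤ c₂ →
        (∃ w, (A + R).mulVec w = b) → (∃ w, (A' + R).mulVec w = b') →
        ‖PA.mulVec b - PA'.mulVec b'‖ ≤ L * (‖A - A'‖ + ‖b - b'‖) := by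
  refine ⟨((↑p * (c₂ / ε) + (↑p * (c₁ + ‖R‖)) * ((1 + ↑p) * (↑p * (c₂ / ε ^ 2)))
      + ε * ((1 + ↑p) * (↑p * (c₂ / ε ^ 2))) + 1) / ε), by positivity, ?_⟩
  intro A A' PA PA' b b' hA hA' hPA hPA' hmsv hmsv' hnA hnA' hnb hnb' hb hb'
  obtain ⟨h1, h2, h3, h4⟩ := hPA
  obtain ⟨h1', h2', h3', h4'⟩ := hPA'
  have hM'B : ‖A' + R‖ ≤ c₁ + ‖R‖ :=
    (norm_add_le A' R).trans (add_le_add_left hnA' _)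
  have key := aux_core (A + R) (A' + R) PA PA' b b' ε c₂ (c₁ + ‖R‖) hε hc₂.le
    (by positivity) (aux_psd_transpose (hA.add hR)) (aux_psd_transpose (hA'.add hR))
    h1 h4 h1' h3' h4' hmsv hmsv' hnb hnb' hb hb' hM'B
  rwa [show A + R - (A' + R) = A - A' from by abel] at key
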